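/- Let G be a finite graph, u, v ∈ V(G), and T ⊆ V(G). In the percolation model E₂^{p,T} on the bunkbed graph G̃ = G × K₂ (vertical edges present exactly at T, horizontal edges e₀, e₁ present independently with probability p_e), if T contains a cutset of G separating u from v, or if u ∈ T, or if v ∈ T, then P(u₀ ↔ v₀) = P(u₀ ↔ v₁). -/

import Mathlib

open scoped Classical

noncomputable section

/-- Indicator of a proposition, as a real number. -/
def pInd (P : Prop) : ℝ := if P then 1 else 0

variable {V : Type}

/-- The bunkbed presence graph: `σ e b` tells whether the copy of edge `e` in layer `b`
is present; vertical edges are present exactly at vertices of `T`. -/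
def bbGraph (G : SimpleGraph V) (σ : Sym2 V → Bool → Bool) (T : Set V) :
    SimpleGraph (V × Bool) where
  Adj a b := (a.2 = b.2 ∧ G.Adj a.1 b.1 ∧ σ s(a.1, b.1) a.2 = true) ∨
    (a.1 = b.1 ∧ a.2 ≠ b.2 ∧ a.1 ∈ T)
  symm := by
    constructor
    intro a b h
    rcases h with ⟨h1, h2, h3⟩ | ⟨h1, h2, h3⟩
    · exact Or.inl ⟨h1.symm, h2.symm, by rwa [Sym2.eq_swap, ← h1]⟩
    · exact Or.inr ⟨h1.symm, Ne.symm h2, h1 ▸ h3⟩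
  loopless := by
    constructor
    rintro a (⟨h1, h2, h3⟩ | ⟨h1, h2, h3⟩)
    · exact G.irrefl h2
    · exact h2 rfl

/-- Weight of a horizontal configuration in model E₂: each copy of an edge `e` of `G`
is present with probability `p e`, independently (non-edges carry weight 1/2 each so
that the total mass is 1). -/
def wE2 [Fintype V] [DecidableEq V] (G : SimpleGraph V) (p : Sym2 V → ℝ)
    (σ : Sym2 V → Bool → Bool) : ℝ :=
  ∏ e : Sym2 V, ∏ b : Bool,
    if e ∈ G.edgeSet then (if σ e b then p e else 1 - p e) else 1 / 2

/-- Connection probability in model E₂^{p,T}. -/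
def PE2 [Fintype V] [DecidableEq V] (G : SimpleGraph V) (p : Sym2 V → ℝ) (T : Set V)
    (x y : V × Bool) : ℝ :=
  ∑ σ : Sym2 V → Bool → Bool, wE2 G p σ * pInd ((bbGraph G σ T).Reachable x y)

/-- Connection probability in model E₁^p: every edge of the bunkbed graph (horizontal
and vertical) present independently with probability `p`. -/
def PE1 [Fintype V] [DecidableEq V] (G : SimpleGraph V) (p : ℝ) (x y : V × Bool) : ℝ :=
  ∑ σ : Sym2 V → Bool → Bool, ∑ η : V → Bool,
    wE2 G (fun _ => p) σ * (∏ v : V, if η v then p else 1 - p) *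
      pInd ((bbGraph G σ {v | η v = true}).Reachable x y)

/-- Deleting a set of vertices from a simple graph (keeping the vertex type). -/
def delVerts (G : SimpleGraph V) (C : Set V) : SimpleGraph V where
  Adj a b := G.Adj a b ∧ a ∉ C ∧ b ∉ C
  symm := ⟨fun _ _ ⟨h, ha, hb⟩ => ⟨h.symm, hb, ha⟩⟩
  loopless := ⟨fun _ ⟨h, _, _⟩ => G.irrefl h⟩

/-- Edges to be flipped by the mirror map. -/
def mFlip (S T : Set V) (e : Sym2 V) : Prop :=
  (∀ x ∈ e, x ∈ S) ∨ (∃ x ∈ e, x ∈ S ∧ x ∉ T)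

/-- The mirror involution on configurations. -/
def mirror (S T : Set V) (σ : Sym2 V → Bool → Bool) : Sym2 V → Bool → Bool :=
  fun e b => if mFlip S T e then σ e (!b) else σ e b

lemma mirror_mirror (S T : Set V) (σ : Sym2 V → Bool → Bool) :
    mirror S T (mirror S T σ) = σ := by
  funext e b
  unfold mirror
  by_cases h : mFlip S T e <;> simp [h]

lemma wE2_mirror [Fintype V] [DecidableEq V] (G : SimpleGraph V) (p : Sym2 V → ℝ)
    (S T : Set V) (σ : Sym2 V → Bool → Bool) :
    wE2 G p (mirror S T σ) = wE2 G p σ := by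
  unfold wE2
  refine Finset.prod_congr rfl fun e _ => ?_
  by_cases h : mFlip S T e
  · rw [Fintype.prod_bool, Fintype.prod_bool, mul_comm]
    simp [mirror, h]
  · simp [mirror, h]

/-- Mirror reflection on vertices of the bunkbed. -/
def mref (S : Set V) (a : V × Bool) : V × Bool :=
  (a.1, if a.1 ∈ S then !a.2 else a.2)

lemma mirror_adj (G : SimpleGraph V) (S T : Set V)
    (hcross : ∀ a c, G.Adj a c → a ∈ S → c ∉ S → a ∈ T ∨ c ∈ T)
    (σ : Sym2 V → Bool → Bool) {a b : V × Bool} (h : (bbGraph G σ T).Adj a b) :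
    (bbGraph G (mirror S T σ) T).Reachable (mref S a) (mref S b) := by
  obtain ⟨x, s⟩ := a; obtain ⟨y, t⟩ := b
  rcases h with ⟨h1, h2, h3⟩ | ⟨h1, h2, h3⟩
  · simp only at h1 h2 h3
    subst h1
    by_cases hx : x ∈ S <;> by_cases hy : y ∈ S
    · -- both in S : flipped edge
      have hf : mFlip S T s(x, y) := Or.inl (by
        intro z hz; rcases Sym2.mem_iff.mp hz with rfl | rfl <;> assumption)
      rw [show mref S (x, s) = (x, !s) from by simp [mref, hx],
        show mref S (y, s) = (y, !s) from by simp [mref, hy]]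
      refine SimpleGraph.Adj.reachable (Or.inl ⟨rfl, h2, ?_⟩)
      simp only [mirror, hf, if_true, Bool.not_not]
      exact h3
    · -- x ∈ S, y ∉ S : crossing
      by_cases hf : mFlip S T s(x, y)
      · -- flipped; then x ∉ T, so y ∈ T
        have hxT : x ∉ T := by
          rcases hf with hf | ⟨z, hz, hzS, hzT⟩
          · exact absurd (hf y (Sym2.mem_mk_right x y)) hy
          · rcases Sym2.mem_iff.mp hz with rfl | rfl
            · exact hzT
            · exact absurd hzS hy
        have hyT : y ∈ T := (hcross x y h2 hx hy).resolve_left hxT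
        have a1 : (bbGraph G (mirror S T σ) T).Adj (x, !s) (y, !s) := by
          refine Or.inl ⟨rfl, h2, ?_⟩
          simp only [mirror, hf, if_true, Bool.not_not]
          exact h3
        have a2 : (bbGraph G (mirror S T σ) T).Adj (y, !s) (y, s) :=
          Or.inr ⟨rfl, by simp, hyT⟩
        rw [show mref S (x, s) = (x, !s) from by simp [mref, hx],
          show mref S (y, s) = (y, s) from by simp [mref, hy]]
        exact a1.reachable.trans a2.reachable
      · -- not flipped; then x ∈ T
        have hxT : x ∈ T := by
          by_contra hxT
          exact hf (Or.inr ⟨x, Sym2.mem_mk_left x y, hx, hxT⟩)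
        have a1 : (bbGraph G (mirror S T σ) T).Adj (x, !s) (x, s) :=
          Or.inr ⟨rfl, by simp, hxT⟩
        have a2 : (bbGraph G (mirror S T σ) T).Adj (x, s) (y, s) := by
          refine Or.inl ⟨rfl, h2, ?_⟩
          simp only [mirror, hf, if_false]
          exact h3
        rw [show mref S (x, s) = (x, !s) from by simp [mref, hx],
          show mref S (y, s) = (y, s) from by simp [mref, hy]]
        exact a1.reachable.trans a2.reachable
    · -- x ∉ S, y ∈ S : crossing the other way
      by_cases hf : mFlip S T s(x, y)
      · have hyT : y ∉ T := by
          rcases hf with hf | ⟨z, hz, hzS, hzT⟩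
          · exact absurd (hf x (Sym2.mem_mk_left x y)) hx
          · rcases Sym2.mem_iff.mp hz with rfl | rfl
            · exact absurd hzS hx
            · exact hzT
        have hxT : x ∈ T := (hcross y x h2.symm hy hx).resolve_left hyT
        have a1 : (bbGraph G (mirror S T σ) T).Adj (x, s) (x, !s) :=
          Or.inr ⟨rfl, by simp, hxT⟩
        have a2 : (bbGraph G (mirror S T σ) T).Adj (x, !s) (y, !s) := by
          refine Or.inl ⟨rfl, h2, ?_⟩
          simp only [mirror, hf, if_true, Bool.not_not]
          exact h3
        rw [show mref S (x, s) = (x, s) from by simp [mref, hx],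
          show mref S (y, s) = (y, !s) from by simp [mref, hy]]
        exact a1.reachable.trans a2.reachable
      · have hyT : y ∈ T := by
          by_contra hyT
          exact hf (Or.inr ⟨y, Sym2.mem_mk_right x y, hy, hyT⟩)
        have a1 : (bbGraph G (mirror S T σ) T).Adj (x, s) (y, s) := by
          refine Or.inl ⟨rfl, h2, ?_⟩
          simp only [mirror, hf, if_false]
          exact h3
        have a2 : (bbGraph G (mirror S T σ) T).Adj (y, s) (y, !s) :=
          Or.inr ⟨rfl, by simp, hyT⟩
        rw [show mref S (x, s) = (x, s) from by simp [mref, hx],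
          show mref S (y, s) = (y, !s) from by simp [mref, hy]]
        exact a1.reachable.trans a2.reachable
    · -- both outside S : unchanged
      have hf : ¬ mFlip S T s(x, y) := by
        rintro (hf | ⟨z, hz, hzS, _⟩)
        · exact hx (hf x (Sym2.mem_mk_left x y))
        · rcases Sym2.mem_iff.mp hz with rfl | rfl
          · exact hx hzS
          · exact hy hzS
      rw [show mref S (x, s) = (x, s) from by simp [mref, hx],
        show mref S (y, s) = (y, s) from by simp [mref, hy]]
      refine SimpleGraph.Adj.reachable (Or.inl ⟨rfl, h2, ?_⟩)
      simp only [mirror, hf, if_false]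
      exact h3
  · simp only at h1 h2 h3
    subst h1
    refine SimpleGraph.Adj.reachable (Or.inr ⟨rfl, ?_, h3⟩)
    simp only [mref]
    by_cases hx : x ∈ S <;> simp [hx, h2]

lemma mirror_reach (G : SimpleGraph V) (S T : Set V)
    (hcross : ∀ a c, G.Adj a c → a ∈ S → c ∉ S → a ∈ T ∨ c ∈ T)
    (σ : Sym2 V → Bool → Bool) {x y : V × Bool} (h : (bbGraph G σ T).Reachable x y) :
    (bbGraph G (mirror S T σ) T).Reachable (mref S x) (mref S y) := by
  obtain ⟨w⟩ := h
  induction w with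
  | nil => exact SimpleGraph.Reachable.refl _
  | cons hadj _ ih => exact (mirror_adj G S T hcross σ hadj).trans ih

lemma core [Fintype V] [DecidableEq V] (G : SimpleGraph V) (S T : Set V)
    (p : Sym2 V → ℝ) (u v : V) (hu : u ∉ S) (hv : v ∈ S)
    (hcross : ∀ a c, G.Adj a c → a ∈ S → c ∉ S → a ∈ T ∨ c ∈ T) :
    PE2 G p T (u, false) (v, false) = PE2 G p T (u, false) (v, true) := by
  unfold PE2
  refine Fintype.sum_bijective (mirror S T)
    (Function.Involutive.bijective (mirror_mirror S T)) _ _ fun σ => ?_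
  have hw := wE2_mirror G p S T σ
  have hA : (bbGraph G σ T).Reachable (u, false) (v, false) ↔
      (bbGraph G (mirror S T σ) T).Reachable (u, false) (v, true) := by
    constructor
    · intro hr
      have := mirror_reach G S T hcross σ hr
      simpa [mref, hu, hv] using this
    · intro hr
      have := mirror_reach G S T hcross (mirror S T σ) hr
      rw [mirror_mirror] at this
      simpa [mref, hu, hv] using this
  rw [hw]
  unfold pInd
  congr 1
  · simp only [propext hA]
    congr!

/-- If `T` contains a cutset of `G` separating `u` from `v`, or `u ∈ T`, or `v ∈ T`,
then the two bunkbed connection probabilities in model E₂^{p,T} are equal. -/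
theorem bunkbed_E2_eq_of_cutset [Fintype V] [DecidableEq V] (G : SimpleGraph V)
    (hconn : G.Connected) (u v : V) (T : Set V) (p : Sym2 V → ℝ)
    (hp : ∀ e, 0 ≤ p e ∧ p e ≤ 1)
    (h : (∃ C : Set V, C ⊆ T ∧ u ∉ C ∧ v ∉ C ∧ ¬ (delVerts G C).Reachable u v) ∨
      u ∈ T ∨ v ∈ T) :
    PE2 G p T (u, false) (v, false) = PE2 G p T (u, false) (v, true) := by
  by_cases huv : u = v
  · subst huv
    have hT : u ∈ T := by
      rcases h with ⟨C, _, _, _, hnr⟩ | h | h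
      · exact absurd (SimpleGraph.Reachable.refl u) hnr
      · exact h
      · exact h
    unfold PE2
    refine Finset.sum_congr rfl fun σ _ => ?_
    have h1 : (bbGraph G σ T).Reachable (u, false) (u, false) := .refl _
    have h2 : (bbGraph G σ T).Reachable (u, false) (u, true) :=
      SimpleGraph.Adj.reachable (Or.inr ⟨rfl, by simp, hT⟩)
    simp [pInd, h1, h2]
  · rcases h with ⟨C, hCT, huC, hvC, hnr⟩ | hT | hT
    · -- cutset case
      set S : Set V := {x | (delVerts G C).Reachable v x} with hS
      have notC : ∀ {x y : V}, (delVerts G C).Walk x y → x ∉ C → y ∉ C := by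
        intro x y w
        induction w with
        | nil => exact id
        | cons hadj _ ih => exact fun _ => ih hadj.2.2
      refine core G S T p u v (fun hr => hnr hr.symm) (SimpleGraph.Reachable.refl v)
        (fun a c hadj haS hcS => ?_)
      have haC : a ∉ C := by
        obtain ⟨w⟩ := (haS : (delVerts G C).Reachable v a)
        exact notC w hvC
      have hcC : c ∈ C := by
        by_contra hcC
        exact hcS ((haS : (delVerts G C).Reachable v a).trans
          (SimpleGraph.Adj.reachable ⟨hadj, haC, hcC⟩))
      exact Or.inr (hCT hcC)
    · -- u ∈ T : S = complement of {u}
      refine core G {x | x ≠ u} T p u v (by simp) (Ne.symm huv)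
        (fun a c _ _ hcS => ?_)
      have : c = u := by simpa using hcS
      exact Or.inr (this ▸ hT)
    · -- v ∈ T : S = {v}
      refine core G {v} T p u v (by simpa using huv) rfl
        (fun a c _ haS _ => Or.inl (by rwa [Set.mem_singleton_iff.mp haS]))


end
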